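/- Assume char(k) ∉ {2, 3, 5}. Let a, b, c, d be a basis of R₁, let e = a + b + c + d, and let 𝔔 = k(a² − e²) ⊕ k(a² − b²) ⊕ k(a² − c²) ⊕ k(a² − d²) ⊆ R₂. Then 𝔔 is base-point free, and exactly ten one-dimensional subspaces of 𝔔 are spanned by a quadratic form of rank exactly two. ([SV], Example 5.1, main claim.) -/

import Mathlib

/-!
STATEMENT 10: [SV, Example 5.1, main claim]. Assume char(k) ∉ {2, 3, 5}. With
a, b, c, d a basis of R₁, e = a + b + c + d and
𝔔 = k(a² − e²) ⊕ k(a² − b²) ⊕ k(a² − c²) ⊕ k(a² − d²), the subspace 𝔔 is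
base-point free and exactly ten one-dimensional subspaces of 𝔔 are spanned by
a quadratic form of rank exactly two.
-/

noncomputable section

open MvPolynomial

/-- The quadratic form `xᵀNx` associated to a 4×4 matrix `N`. -/
def quadOfMat (k : Type*) [Field k] (N : Matrix (Fin 4) (Fin 4) k) :
    MvPolynomial (Fin 4) k :=
  ∑ i, ∑ j, N i j • (X i * X j)

/-- `q` has rank exactly `r`: the (unique, as char k ≠ 2) symmetric matrix `N`
with `q = xᵀNx` has rank `r`. -/
def HasRank (k : Type*) [Field k] (q : MvPolynomial (Fin 4) k) (r : ℕ) : Prop :=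
  ∃ N : Matrix (Fin 4) (Fin 4) k, N.IsSymm ∧ q = quadOfMat k N ∧ N.rank = r

/-- A subspace of quadratic forms is base-point free if the only common zero
in k⁴ of all its elements is 0. -/
def BPFree (k : Type*) [Field k] (𝒬 : Submodule k (MvPolynomial (Fin 4) k)) : Prop :=
  ∀ v : Fin 4 → k, (∀ q ∈ 𝒬, eval v q = 0) → v = 0

open Matrix

set_option linter.unusedSectionVars false
set_option maxHeartbeats 1000000

section Machinery

variable {k : Type*} [Field k]



set_option linter.unusedSectionVars false

variable {K : Type*} [Field K]

section RankTools

variable {m n o : Type*} [Fintype m] [Fintype n] [Fintype o] [DecidableEq m]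
  [DecidableEq n] [DecidableEq o]

lemma rank_submatrix_le' (A : Matrix m m K) (f : n → m) (g : o → m) :
    (A.submatrix f g).rank ≤ A.rank := by
  rw [Matrix.rank, Matrix.rank]
  have h : LinearMap.range (A.submatrix f g).mulVecLin ≤
      Submodule.map (LinearMap.funLeft K K f) (LinearMap.range A.mulVecLin) := by
    rintro x ⟨v, rfl⟩
    refine ⟨A.mulVec (fun c => ∑ j, if g j = c then v j else 0), ⟨_, rfl⟩, ?_⟩
    ext i
    simp only [LinearMap.funLeft_apply, Matrix.mulVecLin_apply, Matrix.mulVec,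
      dotProduct, Matrix.submatrix_apply, Finset.mul_sum]
    rw [Finset.sum_comm]
    refine Finset.sum_congr rfl fun j _ => ?_
    simp [mul_ite]
  calc Module.finrank K ↥(LinearMap.range (A.submatrix f g).mulVecLin)
      ≤ Module.finrank K ↥(Submodule.map (LinearMap.funLeft K K f)
        (LinearMap.range A.mulVecLin)) := Submodule.finrank_mono h
    _ ≤ Module.finrank K ↥(LinearMap.range A.mulVecLin) :=
        Submodule.finrank_map_le _ _

lemma le_rank_of_det_submatrix_ne_zero (A : Matrix m m K) (f g : n → m)
    (h : (A.submatrix f g).det ≠ 0) : Fintype.card n ≤ A.rank := by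
  have h1 : (A.submatrix f g).rank = Fintype.card n :=
    Matrix.rank_of_isUnit _ ((Matrix.isUnit_iff_isUnit_det _).2 h.isUnit)
  calc Fintype.card n = (A.submatrix f g).rank := h1.symm
    _ ≤ A.rank := rank_submatrix_le' A f g

lemma det_submatrix_eq_zero_of_rank_lt (A : Matrix m m K) (f g : n → m)
    (h : A.rank < Fintype.card n) : (A.submatrix f g).det = 0 := by
  by_contra hd
  exact absurd (le_rank_of_det_submatrix_ne_zero A f g hd) (not_le.2 h)

lemma matrix_rank_add_le (A B : Matrix m n K) : (A + B).rank ≤ A.rank + B.rank := by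
  rw [Matrix.rank, Matrix.rank, Matrix.rank]
  have h : LinearMap.range (A + B).mulVecLin ≤
      LinearMap.range A.mulVecLin ⊔ LinearMap.range B.mulVecLin := by
    rintro x ⟨v, rfl⟩
    rw [Matrix.mulVecLin_apply, Matrix.add_mulVec]
    exact Submodule.add_mem_sup ⟨v, rfl⟩ ⟨v, rfl⟩
  calc Module.finrank K ↥(LinearMap.range (A + B).mulVecLin)
      ≤ Module.finrank K ↥(LinearMap.range A.mulVecLin ⊔ LinearMap.range B.mulVecLin) :=
        Submodule.finrank_mono h
    _ ≤ _ := Submodule.finrank_add_le_finrank_add_finrank _ _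

lemma rank_vecMulVec_le (u v : m → K) : (Matrix.vecMulVec u v).rank ≤ 1 := by
  rw [Matrix.rank]
  have h : LinearMap.range (Matrix.vecMulVec u v).mulVecLin ≤ Submodule.span K {u} := by
    rintro x ⟨w, rfl⟩
    rw [Matrix.mulVecLin_apply]
    have : (Matrix.vecMulVec u v).mulVec w = (v ⬝ᵥ w) • u := by
      ext i
      simp only [Matrix.vecMulVec, Matrix.mulVec, dotProduct, Matrix.of_apply,
        Pi.smul_apply, smul_eq_mul, Finset.sum_mul, Finset.mul_sum]
      exact Finset.sum_congr rfl fun j _ => by ring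
    rw [this]
    exact Submodule.smul_mem _ _ (Submodule.mem_span_singleton_self u)
  calc Module.finrank K ↥(LinearMap.range (Matrix.vecMulVec u v).mulVecLin)
      ≤ Module.finrank K ↥(Submodule.span K {u}) := Submodule.finrank_mono h
    _ ≤ 1 := by
        refine le_trans (finrank_span_le_card ({u} : Set (m → K))) (by simp)

lemma rank_smul_eq (t : K) (ht : t ≠ 0) (A : Matrix m m K) : (t • A).rank = A.rank := by
  have : t • A = (t • (1 : Matrix m m K)) * A := by
    rw [Matrix.smul_mul, one_mul]
  rw [this]
  apply Matrix.rank_mul_eq_right_of_isUnit_det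
  simp [Matrix.det_smul, ht]

end RankTools

variable {k : Type*} [Field k]

noncomputable section

def wStd (k : Type*) [Field k] : Fin 5 → Fin 4 → k := fun l p =>
  if l = p.castSucc ∨ l = Fin.last 4 then 1 else 0

def MofMu (k : Type*) [Field k] (μ : Fin 5 → k) : Matrix (Fin 4) (Fin 4) k :=
  ∑ l, μ l • Matrix.vecMulVec (wStd k l) (wStd k l)

def nupair (i j : Fin 5) (t : k) : Fin 5 → k :=
  fun l => t * ((if l = i then 1 else 0) - if l = j then 1 else 0)

lemma MofMu_apply (μ : Fin 5 → k) (p q : Fin 4) :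
    MofMu k μ p q = (if p = q then μ p.castSucc else 0) + μ 4 := by
  unfold MofMu
  rw [Matrix.sum_apply]
  simp only [Pi.smul_apply, Matrix.smul_apply, Matrix.vecMulVec_apply, smul_eq_mul]
  rw [Fin.sum_univ_castSucc]
  have h4 : ∀ p : Fin 4, wStd k (Fin.last 4) p = 1 := by
    intro p; simp [wStd]
  have hc : ∀ (r p : Fin 4), wStd k r.castSucc p = if r = p then 1 else 0 := by
    intro r p
    by_cases h : r = p
    · subst h; simp [wStd]
    · simp [wStd, h, Fin.castSucc_inj, (Fin.castSucc_lt_last r).ne,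
      (show r.castSucc ≠ (4:Fin 5) from (Fin.castSucc_lt_last r).ne)]
  simp only [h4, hc, mul_one]
  have : ∀ r : Fin 4, μ r.castSucc * ((if r = p then (1:k) else 0) * if r = q then 1 else 0)
      = if r = p then (if p = q then μ p.castSucc else 0) else 0 := by
    intro r
    by_cases hrp : r = p <;> by_cases hrq : r = q <;> subst_eqs <;> simp_all
  rw [Finset.sum_congr rfl fun r _ => this r, Finset.sum_ite_eq' Finset.univ p _]
  have : (Fin.last 4) = (4 : Fin 5) := rfl
  simp [this]

lemma vecMulVec_smul_left (t : k) (u v : Fin 4 → k) :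
    t • Matrix.vecMulVec u v = Matrix.vecMulVec (t • u) v := by
  ext p q; simp [Matrix.vecMulVec_apply, mul_assoc]

lemma MofMu_nupair (i j : Fin 5) (t : k) :
    MofMu k (nupair i j t) = Matrix.vecMulVec (t • wStd k i) (wStd k i)
      + Matrix.vecMulVec ((-t) • wStd k j) (wStd k j) := by
  unfold MofMu nupair
  rw [← vecMulVec_smul_left, ← vecMulVec_smul_left]
  simp only [mul_sub, mul_ite, mul_one, mul_zero, sub_smul, ite_smul, zero_smul]
  rw [Finset.sum_sub_distrib, Finset.sum_ite_eq' Finset.univ i _,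
    Finset.sum_ite_eq' Finset.univ j _]
  simp [sub_eq_add_neg]

lemma two_le_rank_of_minor (A : Matrix (Fin 4) (Fin 4) k) (p q : Fin 4)
    (h : A p p * A q q - A p q * A q p ≠ 0) : 2 ≤ A.rank := by
  have h2 : (A.submatrix ![p, q] ![p, q]).det ≠ 0 := by
    rw [Matrix.det_fin_two]
    simpa using h
  simpa using le_rank_of_det_submatrix_ne_zero A ![p, q] ![p, q] h2

lemma minor3_zero (A : Matrix (Fin 4) (Fin 4) k) (h : A.rank = 2)
    (f g : Fin 3 → Fin 4) : (A.submatrix f g).det = 0 := by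
  apply det_submatrix_eq_zero_of_rank_lt
  simp [h]

lemma nupair_rank_le (i j : Fin 5) (t : k) : (MofMu k (nupair i j t)).rank ≤ 2 := by
  rw [MofMu_nupair]
  have h1 := rank_vecMulVec_le (K := k) (t • wStd k i) (wStd k i)
  have h2 := rank_vecMulVec_le (K := k) ((-t) • wStd k j) (wStd k j)
  have h3 := matrix_rank_add_le (Matrix.vecMulVec (t • wStd k i) (wStd k i))
    (Matrix.vecMulVec ((-t) • wStd k j) (wStd k j))
  omega

lemma nupair_rank_eq (i j : Fin 5) (t : k) (hij : i < j) (ht : t ≠ 0) :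
    (MofMu k (nupair i j t)).rank = 2 := by
  refine le_antisymm (nupair_rank_le i j t) ?_
  have hij' : i ≠ j := hij.ne
  have hi4 : i ≠ Fin.last 4 := (lt_of_lt_of_le hij (Fin.le_last j)).ne
  have hmm : ∀ p q : Fin 4, MofMu k (nupair i j t) p q
      = (if p = q then nupair i j t p.castSucc else 0) + nupair i j t 4 :=
    fun p q => MofMu_apply _ p q
  have hl4 : (4 : Fin 5) = Fin.last 4 := rfl
  by_cases hj4 : j = Fin.last 4
  · -- j = last
    have hiv : (i : ℕ) < 4 := by
      have := hij; rw [hj4] at this; exact this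
    set i0 : Fin 4 := i.castLT hiv with hi0
    have hcsi : i0.castSucc = i := Fin.castSucc_castLT i hiv
    set q0 : Fin 4 := if i0 = 0 then 1 else 0 with hq0
    have hq0i : q0 ≠ i0 := by
      rw [hq0]; split_ifs with h
      · rw [h]; decide
      · exact fun hh => h hh.symm
    have hn4 : nupair i j t 4 = -t := by
      simp [nupair, hl4, ← hj4, (by rw [hl4]; exact hi4.symm : (4:Fin 5) ≠ i), hij'.symm]
    have hnii : nupair i j t i = t := by simp [nupair, hij']
    have hnqq : nupair i j t q0.castSucc = 0 := by
      have h1 : q0.castSucc ≠ i := by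
        rw [← hcsi]; exact fun hh => hq0i (Fin.castSucc_injective _ hh)
      have h2 : q0.castSucc ≠ j := by rw [hj4]; exact (Fin.castSucc_lt_last q0).ne
      simp [nupair, h1, h2]
    apply two_le_rank_of_minor _ i0 q0
    rw [hmm, hmm, hmm, hmm, hcsi]
    simp only [if_pos rfl, if_neg (show i0 ≠ q0 from fun hh => hq0i hh.symm), if_neg hq0i]
    rw [hn4, hnii, hnqq]
    ring_nf
    simpa using pow_ne_zero 2 ht
  · -- j < last
    have hjv : (j : ℕ) < 4 := by
      have := (Fin.le_last j).lt_of_ne hj4; exact this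
    have hiv : (i : ℕ) < 4 := lt_trans hij hjv
    set i0 : Fin 4 := i.castLT hiv with hi0
    set j0 : Fin 4 := j.castLT hjv with hj0
    have hcsi : i0.castSucc = i := Fin.castSucc_castLT i hiv
    have hcsj : j0.castSucc = j := Fin.castSucc_castLT j hjv
    have hij0 : i0 ≠ j0 := by
      intro hh; apply hij'
      rw [← hcsi, ← hcsj, hh]
    have hn4 : nupair i j t 4 = 0 := by
      have h1 : (4 : Fin 5) ≠ i := by rw [hl4]; exact hi4.symm
      have h2 : (4 : Fin 5) ≠ j := by rw [hl4]; exact fun hh => hj4 hh.symm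
      simp [nupair, h1, h2]
    have hnii : nupair i j t i = t := by simp [nupair, hij']
    have hnjj : nupair i j t j = -t := by simp [nupair, hij'.symm]
    apply two_le_rank_of_minor _ i0 j0
    rw [hmm, hmm, hmm, hmm, hcsi, hcsj]
    simp only [if_pos rfl, if_neg hij0, if_neg (show j0 ≠ i0 from fun hh => hij0 hh.symm)]
    rw [hn4, hnii, hnjj]
    ring_nf
    simpa using pow_ne_zero 2 ht

lemma rank_MofMu_eq_two_iff (μ : Fin 5 → k) (hsum : ∑ l, μ l = 0) :
    (MofMu k μ).rank = 2 ↔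
      ∃ (i j : Fin 5) (t : k), i < j ∧ t ≠ 0 ∧ μ = nupair i j t := by
  classical
  constructor
  · intro hr
    have hl4 : (4 : Fin 5) = Fin.last 4 := rfl
    by_cases h4 : μ 4 = 0
    · -- diagonal case
      have hdiag : MofMu k μ = Matrix.diagonal (fun p => μ p.castSucc) := by
        ext p q
        rw [MofMu_apply, h4, add_zero, Matrix.diagonal_apply]
      rw [hdiag, Matrix.rank_diagonal] at hr
      rw [Fintype.card_subtype] at hr
      obtain ⟨p, q, hpq, hset⟩ := Finset.card_eq_two.1 hr
      have hp : μ p.castSucc ≠ 0 := by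
        have : p ∈ Finset.filter (fun i => μ i.castSucc ≠ 0) Finset.univ := by
          rw [hset]; simp
        exact (Finset.mem_filter.1 this).2
      have hq : μ q.castSucc ≠ 0 := by
        have : q ∈ Finset.filter (fun i => μ i.castSucc ≠ 0) Finset.univ := by
          rw [hset]; simp
        exact (Finset.mem_filter.1 this).2
      have hz : ∀ r : Fin 4, r ≠ p → r ≠ q → μ r.castSucc = 0 := by
        intro r hrp hrq
        by_contra hr0
        have : r ∈ Finset.filter (fun i => μ i.castSucc ≠ 0) Finset.univ := by
          simp [hr0]
        rw [hset] at this
        simp only [Finset.mem_insert, Finset.mem_singleton] at this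
        tauto
      have hsum4 : ∑ r : Fin 4, μ r.castSucc = 0 := by
        rw [Fin.sum_univ_castSucc] at hsum
        rw [← hl4, h4, add_zero] at hsum
        exact hsum
      have hsum2 : μ p.castSucc + μ q.castSucc = 0 := by
        have h1 : ∑ r : Fin 4, μ r.castSucc = ∑ r ∈ ({p, q} : Finset (Fin 4)), μ r.castSucc := by
          symm
          apply Finset.sum_subset (Finset.subset_univ _)
          intro r _ hrm
          simp only [Finset.mem_insert, Finset.mem_singleton] at hrm
          push_neg at hrm
          exact hz r hrm.1 hrm.2
        rw [Finset.sum_pair hpq] at h1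
        rw [← h1]; exact hsum4
      have hqval : μ q.castSucc = -μ p.castSucc := by linear_combination hsum2
      have hnu : ∀ (p' q' r : Fin 4) (t : k), nupair p'.castSucc q'.castSucc t r.castSucc
          = t * ((if r = p' then 1 else 0) - if r = q' then 1 else 0) := by
        intro p' q' r t
        simp [nupair, Fin.castSucc_inj]
      have hnu4 : ∀ (p' q' : Fin 4) (t : k),
          nupair p'.castSucc q'.castSucc t (Fin.last 4) = 0 := by
        intro p' q' t
        simp [nupair, (Fin.castSucc_lt_last p').ne', (Fin.castSucc_lt_last q').ne',
          (show (4:Fin 5) ≠ p'.castSucc from (Fin.castSucc_lt_last p').ne'),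
          (show (4:Fin 5) ≠ q'.castSucc from (Fin.castSucc_lt_last q').ne')]
      rcases hpq.lt_or_gt with hlt | hlt
      · refine ⟨p.castSucc, q.castSucc, μ p.castSucc,
          Fin.castSucc_lt_castSucc_iff.2 hlt, hp, ?_⟩
        funext l
        induction l using Fin.lastCases with
        | last => rw [hnu4, ← hl4, h4]
        | cast r =>
          rw [hnu]
          by_cases hrp : r = p
          · subst hrp; simp [hpq]
          · by_cases hrq : r = q
            · subst hrq; simp [Ne.symm hpq, hqval]
            · simp [hrp, hrq, hz r hrp hrq]
      · refine ⟨q.castSucc, p.castSucc, μ q.castSucc,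
          Fin.castSucc_lt_castSucc_iff.2 hlt, hq, ?_⟩
        funext l
        induction l using Fin.lastCases with
        | last => rw [hnu4, ← hl4, h4]
        | cast r =>
          rw [hnu]
          by_cases hrq : r = q
          · subst hrq; simp [Ne.symm hpq]
          · by_cases hrp : r = p
            · subst hrp; simp [hpq, hqval]
            · simp [hrp, hrq, hz r hrp hrq]
    · -- μ 4 ≠ 0 case
      have hex : ∀ p q : Fin 4, p ≠ q → ∃ r s : Fin 4,
          r ≠ s ∧ r ≠ p ∧ r ≠ q ∧ s ≠ p ∧ s ≠ q := by decide
      have key : ∀ p q : Fin 4, p ≠ q → μ p.castSucc * μ q.castSucc = 0 := by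
        intro p q hpq
        obtain ⟨r, s, hrs, hrp, hrq, hsp, hsq⟩ := hex p q hpq
        have h0 := minor3_zero _ hr ![p, q, r] ![p, q, s]
        rw [Matrix.det_fin_three] at h0
        simp only [Matrix.submatrix_apply, Matrix.cons_val_zero, Matrix.cons_val_one,
          Matrix.head_cons, Matrix.cons_val_two, Matrix.tail_cons] at h0
        rw [MofMu_apply, MofMu_apply, MofMu_apply, MofMu_apply, MofMu_apply,
          MofMu_apply, MofMu_apply, MofMu_apply, MofMu_apply] at h0
        rw [if_pos rfl, if_pos rfl, if_neg hpq, if_neg (Ne.symm hpq),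
          if_neg (Ne.symm hsp), if_neg (Ne.symm hsq), if_neg hrp, if_neg hrq,
          if_neg hrs] at h0
        have hkey : μ 4 * (μ p.castSucc * μ q.castSucc) = 0 := by
          linear_combination h0
        rcases mul_eq_zero.1 hkey with h | h
        · exact absurd h h4
        · exact h
      have hpex : ∃ p : Fin 4, μ p.castSucc ≠ 0 := by
        by_contra hall
        push_neg at hall
        rw [Fin.sum_univ_castSucc] at hsum
        simp only [hall, Finset.sum_const_zero, zero_add] at hsum
        exact h4 (by rw [hl4]; exact hsum)
      obtain ⟨p, hp⟩ := hpex
      have hz : ∀ r : Fin 4, r ≠ p → μ r.castSucc = 0 := by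
        intro r hrp
        rcases mul_eq_zero.1 (key r p hrp) with h | h
        · exact h
        · exact absurd h hp
      have hval : μ p.castSucc = -μ 4 := by
        rw [Fin.sum_univ_castSucc, ← hl4] at hsum
        have h1 : ∑ r : Fin 4, μ r.castSucc = μ p.castSucc := by
          apply Finset.sum_eq_single
          · intro r _ hrp; exact hz r hrp
          · intro h; exact absurd (Finset.mem_univ p) h
        rw [h1] at hsum
        linear_combination hsum
      refine ⟨p.castSucc, Fin.last 4, -μ 4, Fin.castSucc_lt_last p,
        neg_ne_zero.2 h4, ?_⟩
      funext l
      induction l using Fin.lastCases with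
      | last =>
        have hne : (Fin.last 4 : Fin 5) ≠ p.castSucc := (Fin.castSucc_lt_last p).ne'
        rw [show μ (Fin.last 4) = μ 4 from rfl]
        simp [nupair, hne, (show (4:Fin 5) ≠ p.castSucc from hne)]
      | cast r =>
        by_cases hrp : r = p
        · subst hrp
          simp [nupair, (Fin.castSucc_lt_last r).ne, hval,
            (show r.castSucc ≠ (4:Fin 5) from (Fin.castSucc_lt_last r).ne)]
        · have h1 : r.castSucc ≠ p.castSucc := by
            rw [Ne, Fin.castSucc_inj]; exact hrp
          simp [nupair, h1, (Fin.castSucc_lt_last r).ne, hz r hrp,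
              (show r.castSucc ≠ (4:Fin 5) from (Fin.castSucc_lt_last r).ne)]
  · rintro ⟨i, j, t, hij, ht, rfl⟩
    exact nupair_rank_eq i j t hij ht

lemma MofMu_mulVec (μ : Fin 5 → k) (u : Fin 4 → k) (i : Fin 4) :
    (MofMu k μ).mulVec u i = ∑ l, μ l * (wStd k l ⬝ᵥ u) * wStd k l i := by
  unfold MofMu
  simp only [Matrix.mulVec, dotProduct, Matrix.sum_apply, Matrix.smul_apply,
    Matrix.vecMulVec_apply, smul_eq_mul, Finset.sum_mul, Finset.mul_sum]
  rw [Finset.sum_comm]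
  exact Finset.sum_congr rfl fun l _ => Finset.sum_congr rfl fun j _ => by ring

lemma dot_MofMu (μ : Fin 5 → k) (u : Fin 4 → k) :
    u ⬝ᵥ (MofMu k μ).mulVec u = ∑ l, μ l * (wStd k l ⬝ᵥ u) ^ 2 := by
  rw [dotProduct]
  simp only [MofMu_mulVec, Finset.mul_sum]
  rw [Finset.sum_comm]
  refine Finset.sum_congr rfl fun l _ => ?_
  trans (μ l * (wStd k l ⬝ᵥ u)) * ∑ i, wStd k l i * u i
  · rw [Finset.mul_sum]; exact Finset.sum_congr rfl fun i _ => by ring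
  · rw [dotProduct]; ring

lemma MofMu_isSymm (μ : Fin 5 → k) : (MofMu k μ).IsSymm := by
  rw [Matrix.IsSymm]
  ext p q
  rw [Matrix.transpose_apply, MofMu_apply, MofMu_apply]
  by_cases h : p = q
  · subst h; rfl
  · rw [if_neg h, if_neg (Ne.symm h)]

lemma MofMu_inj {μ ν : Fin 5 → k} (h : MofMu k μ = MofMu k ν) : μ = ν := by
  have h01 : μ 4 = ν 4 := by
    have := congrFun (congrFun h 0) 1
    rw [MofMu_apply, MofMu_apply, if_neg (by decide), if_neg (by decide)] at this
    simpa using this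
  funext l
  induction l using Fin.lastCases with
  | last => exact h01
  | cast r =>
    have := congrFun (congrFun h r) r
    rw [MofMu_apply, MofMu_apply, if_pos rfl, if_pos rfl] at this
    have h01' : μ 4 = ν 4 := h01
    rw [h01'] at this
    exact add_right_cancel this

lemma dot_conj (A M : Matrix (Fin 4) (Fin 4) k) (v : Fin 4 → k) :
    v ⬝ᵥ (Aᵀ * M * A).mulVec v = (A.mulVec v) ⬝ᵥ M.mulVec (A.mulVec v) := by
  rw [Matrix.mul_assoc, ← Matrix.mulVec_mulVec, Matrix.dotProduct_mulVec,
    Matrix.vecMul_transpose, ← Matrix.mulVec_mulVec]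

lemma conj_isSymm (A M : Matrix (Fin 4) (Fin 4) k) (hM : M.IsSymm) :
    (Aᵀ * M * A).IsSymm := by
  rw [Matrix.IsSymm] at hM ⊢
  rw [Matrix.transpose_mul, Matrix.transpose_mul, Matrix.transpose_transpose, hM,
    Matrix.mul_assoc]

lemma conj_rank (A M : Matrix (Fin 4) (Fin 4) k) (hA : IsUnit A.det) :
    (Aᵀ * M * A).rank = M.rank := by
  rw [Matrix.rank_mul_eq_left_of_isUnit_det _ _ hA,
    Matrix.rank_mul_eq_right_of_isUnit_det _ _ (by rwa [Matrix.det_transpose])]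

end



lemma eval_quadOfMat (N : Matrix (Fin 4) (Fin 4) k) (v : Fin 4 → k) :
    eval v (quadOfMat k N) = v ⬝ᵥ N.mulVec v := by
  simp only [quadOfMat, map_sum, smul_eq_C_mul, _root_.map_mul, eval_C, eval_X,
    dotProduct, Matrix.mulVec, Finset.mul_sum]
  refine Finset.sum_congr rfl fun i _ => Finset.sum_congr rfl fun j _ => by ring

-- polarization-based uniqueness
lemma quadOfMat_inj (h2 : (2:k) ≠ 0) {N N' : Matrix (Fin 4) (Fin 4) k}
    (hN : N.IsSymm) (hN' : N'.IsSymm) (h : quadOfMat k N = quadOfMat k N') :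
    N = N' := by
  have hv : ∀ v, v ⬝ᵥ N.mulVec v = v ⬝ᵥ N'.mulVec v := by
    intro v; rw [← eval_quadOfMat, ← eval_quadOfMat, h]
  have hdiag : ∀ i, N i i = N' i i := by
    intro i
    have := hv (Pi.single i 1)
    simpa [dotProduct, Matrix.mulVec, Pi.single_apply] using this
  ext i j
  rcases eq_or_ne i j with rfl | hij
  · exact hdiag i
  · have key : ∀ M : Matrix (Fin 4) (Fin 4) k,
        (Pi.single i (1:k) + Pi.single j 1) ⬝ᵥ M.mulVec (Pi.single i 1 + Pi.single j 1)
          = M i i + M i j + M j i + M j j := by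
      intro M
      rw [Matrix.mulVec_add, dotProduct_add, add_dotProduct,
        add_dotProduct, Matrix.mulVec_single, Matrix.mulVec_single]
      simp only [MulOpposite.op_one, one_smul]
      simp only [single_dotProduct]
      simp only [mul_one, one_mul]
      show M i i + M j i + (M i j + M j j) = M i i + M i j + M j i + M j j
      ring
    have h1 := hv (Pi.single i 1 + Pi.single j 1)
    rw [key N, key N'] at h1
    have hii := hdiag i
    have hjj := hdiag j
    have hsN : N j i = N i j := by
      have := congrFun (congrFun hN.eq i) j
      simpa [Matrix.transpose_apply] using this
    have hsN' : N' j i = N' i j := by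
      have := congrFun (congrFun hN'.eq i) j
      simpa [Matrix.transpose_apply] using this
    have h2' : 2 * N i j = 2 * N' i j := by
      rw [hii, hjj, hsN, hsN'] at h1; linear_combination h1
    exact mul_left_cancel₀ h2 h2'

lemma wStd_last_apply (p : Fin 4) : wStd k (Fin.last 4) p = 1 := by simp [wStd]

lemma wStd_castSucc_apply (r p : Fin 4) :
    wStd k r.castSucc p = if r = p then 1 else 0 := by
  by_cases h : r = p
  · subst h; simp [wStd]
  · simp [wStd, h, Fin.castSucc_inj, (Fin.castSucc_lt_last r).ne,
      (show r.castSucc ≠ (4:Fin 5) from (Fin.castSucc_lt_last r).ne)]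

lemma wStd_castSucc_dot (r : Fin 4) (u : Fin 4 → k) : wStd k r.castSucc ⬝ᵥ u = u r := by
  rw [dotProduct]
  simp only [wStd_castSucc_apply, ite_mul, one_mul, zero_mul]
  rw [Finset.sum_ite_eq Finset.univ r u]
  simp

lemma wStd_last_dot (u : Fin 4 → k) : wStd k (Fin.last 4) ⬝ᵥ u = ∑ p, u p := by
  rw [dotProduct]
  simp [wStd_last_apply, wStd]

end Machinery

theorem stmt10 (k : Type*) [Field k] [IsAlgClosed k]
    (hchar2 : (2 : k) ≠ 0) (hchar3 : (3 : k) ≠ 0) (hchar5 : (5 : k) ≠ 0)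
    (a b c d : MvPolynomial (Fin 4) k)
    (hmem : ∀ t ∈ ({a, b, c, d} : Set (MvPolynomial (Fin 4) k)),
      t ∈ homogeneousSubmodule (Fin 4) k 1)
    (hind : LinearIndependent k ![a, b, c, d])
    (hspan : Submodule.span k {a, b, c, d} =
      homogeneousSubmodule (Fin 4) k 1)
    (e : MvPolynomial (Fin 4) k) (he : e = a + b + c + d)
    (𝔔 : Submodule k (MvPolynomial (Fin 4) k))
    (h𝔔 : 𝔔 = Submodule.span k
      {a ^ 2 - e ^ 2, a ^ 2 - b ^ 2, a ^ 2 - c ^ 2, a ^ 2 - d ^ 2}) :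
    BPFree k 𝔔 ∧
    {W : Submodule k (MvPolynomial (Fin 4) k) |
        ∃ q ∈ 𝔔, q ≠ 0 ∧ W = Submodule.span k {q} ∧ HasRank k q 2}.ncard = 10 := by
  classical
  set fvec : Fin 4 → MvPolynomial (Fin 4) k := ![a, b, c, d] with hfvec
  have hsetrange : ({a, b, c, d} : Set (MvPolynomial (Fin 4) k)) = Set.range fvec := by
    ext x
    constructor
    · rintro (rfl | rfl | rfl | rfl)
      exacts [⟨0, rfl⟩, ⟨1, rfl⟩, ⟨2, rfl⟩, ⟨3, rfl⟩]
    · rintro ⟨i, rfl⟩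
      fin_cases i
      · exact Or.inl rfl
      · exact Or.inr (Or.inl rfl)
      · exact Or.inr (Or.inr (Or.inl rfl))
      · exact Or.inr (Or.inr (Or.inr rfl))
  have hXmem : ∀ m : Fin 4, (X m : MvPolynomial (Fin 4) k) ∈
      Submodule.span k ({a, b, c, d} : Set (MvPolynomial (Fin 4) k)) := by
    intro m
    rw [hspan, mem_homogeneousSubmodule]
    exact isHomogeneous_X _ _
  have hBex : ∀ m : Fin 4, ∃ c : Fin 4 → k, ∑ i, c i • fvec i = X m := by
    intro m
    have := hXmem m
    rw [hsetrange] at this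
    exact (Submodule.mem_span_range_iff_exists_fun k).1 this
  choose B hBeq using hBex
  set Bm : Matrix (Fin 4) (Fin 4) k := Matrix.of B with hBm
  have hXind : ∀ cvec : Fin 4 → k,
      ∑ l, cvec l • (X l : MvPolynomial (Fin 4) k) = 0 → cvec = 0 := by
    intro cvec h
    funext m
    have h1 := congrArg (eval (Pi.single m (1:k))) h
    simp only [map_sum, smul_eq_C_mul, _root_.map_mul, eval_C, eval_X, map_zero] at h1
    have h2 : ∀ l : Fin 4, cvec l * (Pi.single m (1:k) : Fin 4 → k) l
        = if l = m then cvec l else 0 := by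
      intro l
      rcases eq_or_ne l m with rfl | hlm
      · simp
      · simp [Pi.single_apply, hlm, Ne.symm hlm]
    rw [Finset.sum_congr rfl fun l _ => h2 l, Finset.sum_ite_eq' Finset.univ m _] at h1
    simpa using h1
  have hdetB : IsUnit Bm.det := by
    rw [isUnit_iff_ne_zero]
    intro hdet0
    have hdetT : Bmᵀ.det = 0 := by rwa [Matrix.det_transpose]
    obtain ⟨cvec, hc0, hc⟩ := Matrix.exists_mulVec_eq_zero_iff.2 hdetT
    apply hc0
    apply hXind cvec
    have step1 : ∀ l : Fin 4, cvec l • (X l : MvPolynomial (Fin 4) k)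
        = ∑ i, (cvec l * B l i) • fvec i := by
      intro l
      rw [← hBeq l, Finset.smul_sum]
      exact Finset.sum_congr rfl fun i _ => smul_smul _ _ _
    rw [Finset.sum_congr rfl fun l _ => step1 l, Finset.sum_comm]
    have step2 : ∀ i : Fin 4, ∑ l, (cvec l * B l i) • fvec i = (0:k) • fvec i := by
      intro i
      rw [← Finset.sum_smul]
      congr 1
      have := congrFun hc i
      simpa [Matrix.mulVec, dotProduct, hBm, mul_comm] using this
    rw [Finset.sum_congr rfl fun i _ => step2 i]
    simp
  set Am : Matrix (Fin 4) (Fin 4) k := Bm⁻¹ with hAm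
  have hAB : Am * Bm = 1 := Matrix.nonsing_inv_mul _ hdetB
  have hdetA : IsUnit Am.det := by
    have := Matrix.isUnit_nonsing_inv_det Bm hdetB
    rwa [hAm]
  have hphi : ∀ v : Fin 4 → k, ∀ i, eval v (fvec i) = Am.mulVec v i := by
    intro v
    have hv : Bm.mulVec (fun i => eval v (fvec i)) = v := by
      funext l
      have h1 := congrArg (eval v) (hBeq l)
      simp only [map_sum, smul_eq_C_mul, _root_.map_mul, eval_C, eval_X] at h1
      simpa [Matrix.mulVec, dotProduct, hBm] using h1
    have : Am.mulVec v = fun i => eval v (fvec i) := by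
      conv_lhs => rw [← hv]
      rw [Matrix.mulVec_mulVec, hAB, Matrix.one_mulVec]
    intro i
    rw [this]
  set Fvec : Fin 5 → MvPolynomial (Fin 4) k := ![a, b, c, d, e] with hFvec
  set Qf : (Fin 5 → k) → MvPolynomial (Fin 4) k := fun μ => ∑ l, μ l • (Fvec l)^2
    with hQf
  have hFc : ∀ r : Fin 4, Fvec r.castSucc = fvec r := by
    intro r; fin_cases r <;> rfl
  have hevalF : ∀ (v : Fin 4 → k) (l : Fin 5),
      eval v (Fvec l) = wStd k l ⬝ᵥ Am.mulVec v := by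
    intro v l
    induction l using Fin.lastCases with
    | last =>
      rw [wStd_last_dot]
      have h1 : eval v (Fvec (Fin.last 4)) = eval v a + eval v b + eval v c + eval v d := by
        have : Fvec (Fin.last 4) = e := rfl
        rw [this, he]
        simp
      rw [h1, Fin.sum_univ_four, ← hphi v 0, ← hphi v 1, ← hphi v 2, ← hphi v 3]
      rfl
    | cast r =>
      rw [wStd_castSucc_dot, ← hphi v r, hFc r]
  have hQeval : ∀ (μ : Fin 5 → k) (v : Fin 4 → k),
      eval v (Qf μ) = v ⬝ᵥ (Amᵀ * MofMu k μ * Am).mulVec v := by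
    intro μ v
    rw [dot_conj, dot_MofMu, hQf]
    simp only [map_sum, smul_eq_C_mul, _root_.map_mul, eval_C, map_pow]
    exact Finset.sum_congr rfl fun l _ => by rw [hevalF v l]
  have hQmat : ∀ μ : Fin 5 → k, Qf μ = quadOfMat k (Amᵀ * MofMu k μ * Am) := by
    intro μ
    apply MvPolynomial.funext
    intro v
    rw [hQeval, eval_quadOfMat]
  have hQinj : ∀ {μ ν : Fin 5 → k}, Qf μ = Qf ν → μ = ν := by
    intro μ ν h
    rw [hQmat, hQmat] at h
    have hsymμ := conj_isSymm Am (MofMu k μ) (MofMu_isSymm μ)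
    have hsymν := conj_isSymm Am (MofMu k ν) (MofMu_isSymm ν)
    have hMeq' := quadOfMat_inj hchar2 hsymμ hsymν h
    have hdetAT : IsUnit Amᵀ.det := by rwa [Matrix.det_transpose]
    have hMeq : MofMu k μ = MofMu k ν := by
      have h2 := congrArg (fun Z => Amᵀ⁻¹ * Z * Am⁻¹) hMeq'
      simp only [Matrix.mul_assoc] at h2
      rw [Matrix.mul_nonsing_inv _ hdetA] at h2
      simp only [Matrix.mul_one] at h2
      rw [← Matrix.mul_assoc, ← Matrix.mul_assoc, Matrix.nonsing_inv_mul _ hdetAT,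
        Matrix.one_mul, Matrix.one_mul] at h2
      exact h2
    exact MofMu_inj hMeq
  have hQ0 : Qf 0 = 0 := by simp [hQf]
  set gvec : Fin 4 → MvPolynomial (Fin 4) k :=
    ![a^2 - e^2, a^2 - b^2, a^2 - c^2, a^2 - d^2] with hgvec
  have hgsetrange : ({a^2 - e^2, a^2 - b^2, a^2 - c^2, a^2 - d^2} :
      Set (MvPolynomial (Fin 4) k)) = Set.range gvec := by
    ext x
    constructor
    · rintro (rfl | rfl | rfl | rfl)
      exacts [⟨0, rfl⟩, ⟨1, rfl⟩, ⟨2, rfl⟩, ⟨3, rfl⟩]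
    · rintro ⟨i, rfl⟩
      fin_cases i
      · exact Or.inl rfl
      · exact Or.inr (Or.inl rfl)
      · exact Or.inr (Or.inr (Or.inl rfl))
      · exact Or.inr (Or.inr (Or.inr rfl))
  have hQspan : 𝔔 = Submodule.span k (Set.range gvec) := by rw [h𝔔, hgsetrange]
  have hQfeq : ∀ μ : Fin 5 → k, Qf μ = μ 0 • a^2 + μ 1 • b^2 + μ 2 • c^2
      + μ 3 • d^2 + μ 4 • e^2 := by
    intro μ
    rw [hQf]
    simp only [Fin.sum_univ_five]
    rfl
  have hgen : ∀ q, q ∈ 𝔔 ↔ ∃ μ : Fin 5 → k, (∑ l, μ l) = 0 ∧ q = Qf μ := by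
    intro q
    constructor
    · intro hq
      rw [hQspan] at hq
      obtain ⟨lam, hlam⟩ := (Submodule.mem_span_range_iff_exists_fun k).1 hq
      refine ⟨![lam 0 + lam 1 + lam 2 + lam 3, -lam 1, -lam 2, -lam 3, -lam 0], ?_, ?_⟩
      · simp [Fin.sum_univ_five]
        ring
      · rw [hQfeq, ← hlam]
        simp only [Fin.sum_univ_four, hgvec]
        simp only [Matrix.cons_val_zero, Matrix.cons_val_one, Matrix.head_cons,
          Matrix.cons_val_two, Matrix.tail_cons, Matrix.cons_val_three,
          Matrix.cons_val_four, smul_eq_C_mul, map_add, map_neg]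
        ring
    · rintro ⟨μ, hsum, rfl⟩
      rw [hQspan]
      have hmu0 : μ 0 = -μ 1 - μ 2 - μ 3 - μ 4 := by
        rw [Fin.sum_univ_five] at hsum
        linear_combination hsum
      have hid : Qf μ = (-μ 4) • gvec 0 + (-μ 1) • gvec 1
          + (-μ 2) • gvec 2 + (-μ 3) • gvec 3 := by
        rw [hQfeq, hmu0]
        simp only [hgvec, Matrix.cons_val_zero, Matrix.cons_val_one, Matrix.head_cons,
          Matrix.cons_val_two, Matrix.tail_cons, Matrix.cons_val_three,
          smul_eq_C_mul, map_add, map_neg, map_sub]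
        ring
      rw [hid]
      have hmemg : ∀ i : Fin 4, gvec i ∈ Submodule.span k (Set.range gvec) :=
        fun i => Submodule.subset_span ⟨i, rfl⟩
      exact Submodule.add_mem _ (Submodule.add_mem _ (Submodule.add_mem _
        (Submodule.smul_mem _ _ (hmemg 0)) (Submodule.smul_mem _ _ (hmemg 1)))
        (Submodule.smul_mem _ _ (hmemg 2))) (Submodule.smul_mem _ _ (hmemg 3))
  constructor
  · -- BPFree
    intro v hv
    have hvg : ∀ i : Fin 4, eval v (gvec i) = 0 := by
      intro i
      apply hv
      rw [hQspan]
      exact Submodule.subset_span ⟨i, rfl⟩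
    have hEa : (eval v a)^2 = (eval v e)^2 := by
      have := hvg 0
      simp only [hgvec, Matrix.cons_val_zero, map_sub, map_pow] at this
      linear_combination this
    have hEb : (eval v a)^2 = (eval v b)^2 := by
      have := hvg 1
      simp only [hgvec, Matrix.cons_val_one, Matrix.head_cons, Matrix.cons_val_zero, map_sub,
        map_pow] at this
      linear_combination this
    have hEc : (eval v a)^2 = (eval v c)^2 := by
      have := hvg 2
      simp only [hgvec, Matrix.cons_val_two, Matrix.tail_cons, Matrix.head_cons,
        map_sub, map_pow] at this
      linear_combination this
    have hEd : (eval v a)^2 = (eval v d)^2 := by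
      have := hvg 3
      simp only [hgvec, Matrix.cons_val_three, Matrix.tail_cons, Matrix.head_cons,
        map_sub, map_pow] at this
      linear_combination this
    have hEe : eval v e = eval v a + eval v b + eval v c + eval v d := by
      rw [he]; simp
    rw [hEe] at hEa
    set A' := eval v a
    set B' := eval v b
    set C' := eval v c
    set D' := eval v d
    have h15 : (15:k) ≠ 0 := by
      have h35 : (15:k) = 3 * 5 := by norm_num
      rw [h35]
      exact mul_ne_zero hchar3 hchar5
    have hb' : B' = A' ∨ B' = -A' := by
      have h0 : (B' - A') * (B' + A') = 0 := by linear_combination -hEb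
      rcases mul_eq_zero.1 h0 with h | h
      · left; linear_combination h
      · right; linear_combination h
    have hc' : C' = A' ∨ C' = -A' := by
      have h0 : (C' - A') * (C' + A') = 0 := by linear_combination -hEc
      rcases mul_eq_zero.1 h0 with h | h
      · left; linear_combination h
      · right; linear_combination h
    have hd' : D' = A' ∨ D' = -A' := by
      have h0 : (D' - A') * (D' + A') = 0 := by linear_combination -hEd
      rcases mul_eq_zero.1 h0 with h | h
      · left; linear_combination h
      · right; linear_combination h
    have hA0 : A' = 0 := by
      have hsq : A'^2 = 0 := by
        rcases hb' with hb | hb <;> rcases hc' with hc | hc <;> rcases hd' with hd | hd <;>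
          rw [hb, hc, hd] at hEa
        · -- +++ : 15
          have h0 : (15:k) * A'^2 = 0 := by linear_combination -hEa
          rcases mul_eq_zero.1 h0 with h | h
          · exact absurd h h15
          · exact h
        · -- ++- : 3
          have h0 : (3:k) * A'^2 = 0 := by linear_combination -hEa
          rcases mul_eq_zero.1 h0 with h | h
          · exact absurd h hchar3
          · exact h
        · -- +-+ : 3
          have h0 : (3:k) * A'^2 = 0 := by linear_combination -hEa
          rcases mul_eq_zero.1 h0 with h | h
          · exact absurd h hchar3
          · exact h
        · -- +-- : 1
          linear_combination hEa
        · -- -++ : 3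
          have h0 : (3:k) * A'^2 = 0 := by linear_combination -hEa
          rcases mul_eq_zero.1 h0 with h | h
          · exact absurd h hchar3
          · exact h
        · -- -+- : 1
          linear_combination hEa
        · -- --+ : 1
          linear_combination hEa
        · -- --- : 3
          have h0 : (3:k) * A'^2 = 0 := by linear_combination -hEa
          rcases mul_eq_zero.1 h0 with h | h
          · exact absurd h hchar3
          · exact h
      exact (pow_eq_zero_iff (by norm_num : (2:ℕ) ≠ 0)).1 hsq
    have hB0 : B' = 0 := by rcases hb' with h | h <;> rw [h, hA0] <;> ring
    have hC0 : C' = 0 := by rcases hc' with h | h <;> rw [h, hA0] <;> ring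
    have hD0 : D' = 0 := by rcases hd' with h | h <;> rw [h, hA0] <;> ring
    have hvf : ∀ i : Fin 4, eval v (fvec i) = 0 := by
      intro i
      fin_cases i
      exacts [hA0, hB0, hC0, hD0]
    funext m
    obtain ⟨cv, hcv⟩ := (Submodule.mem_span_range_iff_exists_fun k).1
      (by rw [← hsetrange]; exact hXmem m)
    have h1 := congrArg (eval v) hcv
    simp only [map_sum, smul_eq_C_mul, _root_.map_mul, eval_C, eval_X] at h1
    rw [← h1]
    rw [Finset.sum_congr rfl fun i _ => by rw [hvf i, mul_zero]]
    simp
  · -- exactly ten lines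
    have hQsmul : ∀ (t : k) (μ : Fin 5 → k), Qf (t • μ) = t • Qf μ := by
      intro t μ
      rw [hQf]
      simp only [Pi.smul_apply, smul_eq_mul, Finset.smul_sum, smul_smul]
    have hnusum : ∀ i j : Fin 5, ∑ l, nupair i j (1:k) l = 0 := by
      intro i j
      simp only [nupair, one_mul]
      rw [Finset.sum_sub_distrib, Finset.sum_ite_eq' Finset.univ i fun _ => (1:k),
        Finset.sum_ite_eq' Finset.univ j fun _ => (1:k)]
      simp
    have hnuzero_ne : ∀ i j : Fin 5, i < j → nupair i j (1:k) ≠ 0 := by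
      intro i j hij h0
      have h1 := congrFun h0 i
      simp only [nupair, one_mul, if_pos rfl, if_neg hij.ne, Pi.zero_apply] at h1
      rw [sub_zero] at h1
      exact one_ne_zero h1
    have hSeq : {W : Submodule k (MvPolynomial (Fin 4) k) |
          ∃ q ∈ 𝔔, q ≠ 0 ∧ W = Submodule.span k {q} ∧ HasRank k q 2}
        = (fun p : Fin 5 × Fin 5 => Submodule.span k ({Qf (nupair p.1 p.2 1)} :
            Set (MvPolynomial (Fin 4) k))) '' {p : Fin 5 × Fin 5 | p.1 < p.2} := by
      ext W
      simp only [Set.mem_setOf_eq, Set.mem_image]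
      constructor
      · rintro ⟨q, hq, hq0, rfl, N, hNsym, hNq, hNrank⟩
        obtain ⟨μ, hμsum, rfl⟩ := (hgen q).1 hq
        have hNeq : N = Amᵀ * MofMu k μ * Am := by
          apply quadOfMat_inj hchar2 hNsym (conj_isSymm Am _ (MofMu_isSymm μ))
          rw [← hNq, ← hQmat]
        have hrank2 : (MofMu k μ).rank = 2 := by
          rw [← conj_rank Am (MofMu k μ) hdetA, ← hNeq, hNrank]
        obtain ⟨i, j, t, hij, ht, hmu⟩ := (rank_MofMu_eq_two_iff μ hμsum).1 hrank2
        refine ⟨(i, j), hij, ?_⟩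
        have hnut : nupair i j t = t • nupair i j 1 := by
          funext l
          simp only [nupair, Pi.smul_apply, smul_eq_mul]
          ring
        rw [hmu, hnut, hQsmul]
        exact (Submodule.span_singleton_smul_eq (isUnit_iff_ne_zero.2 ht) _).symm
      · rintro ⟨⟨i, j⟩, hij, rfl⟩
        simp only [Set.mem_setOf_eq] at hij
        refine ⟨Qf (nupair i j 1), (hgen _).2 ⟨_, hnusum i j, rfl⟩, ?_, rfl, ?_⟩
        · intro h0
          exact hnuzero_ne i j hij (hQinj (h0.trans hQ0.symm))
        · exact ⟨Amᵀ * MofMu k (nupair i j 1) * Am,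
            conj_isSymm Am _ (MofMu_isSymm _), hQmat _, by
              rw [conj_rank _ _ hdetA]
              exact nupair_rank_eq i j 1 hij one_ne_zero⟩
    rw [hSeq]
    have hinj : Set.InjOn (fun p : Fin 5 × Fin 5 =>
        Submodule.span k ({Qf (nupair p.1 p.2 1)} : Set (MvPolynomial (Fin 4) k)))
        {p : Fin 5 × Fin 5 | p.1 < p.2} := by
      rintro ⟨i, j⟩ hij ⟨i', j'⟩ hij' heq
      simp only [Set.mem_setOf_eq] at hij hij'
      simp only at heq
      have hmem' : Qf (nupair i' j' 1) ∈
          Submodule.span k ({Qf (nupair i j 1)} : Set (MvPolynomial (Fin 4) k)) := by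
        rw [heq]
        exact Submodule.mem_span_singleton_self _
      obtain ⟨s, hs⟩ := Submodule.mem_span_singleton.1 hmem'
      have hs0 : s ≠ 0 := by
        rintro rfl
        rw [zero_smul] at hs
        exact hnuzero_ne i' j' hij' (hQinj (hs.symm.trans hQ0.symm))
      have hnu : s • nupair i j (1:k) = nupair i' j' 1 := by
        apply hQinj
        rw [hQsmul, hs]
      have hval : ∀ l : Fin 5, s * ((if l = i then (1:k) else 0) - if l = j then 1 else 0)
          = (if l = i' then 1 else 0) - if l = j' then 1 else 0 := by
        intro l
        have h1 := congrFun hnu l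
        simpa [nupair] using h1
      by_cases hii : i' = i
      · subst hii
        by_cases hjj : j = j'
        · rw [hjj]
        · exfalso
          have h2 := hval j
          rw [if_neg (Ne.symm hij.ne), if_pos rfl, if_neg hjj] at h2
          exact hs0 (by linear_combination -h2)
      · by_cases hij2 : i' = j
        · by_cases hij3 : i = j'
          · exfalso
            rw [hij2] at hij'
            rw [hij3] at hij
            exact lt_asymm hij hij'
          · exfalso
            have h2 := hval i
            rw [if_pos rfl, if_neg hij.ne, if_neg (fun h => hii h.symm),
              if_neg hij3] at h2
            exact hs0 (by linear_combination h2)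
        · exfalso
          have h1 := hval i'
          rw [if_neg hii, if_neg hij2, if_pos rfl, if_neg hij'.ne] at h1
          exact one_ne_zero (by linear_combination -h1)
    rw [Set.ncard_image_of_injOn hinj]
    have hps : {p : Fin 5 × Fin 5 | p.1 < p.2}
        = ↑(Finset.filter (fun p : Fin 5 × Fin 5 => p.1 < p.2) Finset.univ) := by
      ext p
      simp
    rw [hps, Set.ncard_coe_finset]
    decide

end
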